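/- Let I be a nonempty index set, let Σ be a subcomplex of Σ(I) equipped with the ℓ₂-metric, let X be a c-quasiconvex metric space (c ≥ 1), and let h : |Σ| → X be a homeomorphism which is D-bilipschitz on every face of Σ (D ≥ 1). Then h is (cD)-bilipschitz as a map from (|Σ|, d_i) to X, i.e. (cD)^{-1}·d_i(z, z') ≤ d(h(z), h(z')) ≤ cD·d_i(z, z') for all z, z' ∈ |Σ|. -/

import Mathlib

open Set Metric Filter MeasureTheory
open scoped ENNReal NNReal

noncomputable section

/-- The real Hilbert space `ℓ₂(I)`. -/
abbrev L2 (I : Type*) := lp (fun _ : I => ℝ) 2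

/-- The standard unit vector `e_i ∈ ℓ₂(I)`. -/
noncomputable def stdVec {I : Type*} (i : I) : L2 I :=
  letI := Classical.decEq I; lp.single 2 i 1

/-- The (closed) face of the full complex `Σ(I)` spanned by the vertices `e_i`, `i ∈ s`:
the convex hull of the corresponding standard unit vectors. -/
def faceSet {I : Type*} (s : Finset I) : Set (L2 I) := convexHull ℝ (stdVec '' (s : Set I))

/-- `x` lies in the relative interior of the face spanned by `s`. -/
def memRelInt {I : Type*} (s : Finset I) (x : L2 I) : Prop :=
  x ∈ faceSet s ∧ ∀ i ∈ s, 0 < x i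

/-- A subcomplex of the full complex `Σ(I)`, encoded by the collection of the vertex sets of
its faces: a nonempty collection of finite nonempty subsets of `I`, closed under passing to
nonempty subsets. -/
structure IsSubcomplex {I : Type*} (F : Set (Finset I)) : Prop where
  nonempty : F.Nonempty
  faces_nonempty : ∀ s ∈ F, s.Nonempty
  down_closed : ∀ s ∈ F, ∀ t : Finset I, t.Nonempty → t ⊆ s → t ∈ F

/-- The underlying set `|Σ| ⊆ ℓ₂(I)` of a (sub)complex: the union of its faces. -/
def cpxCarrier {I : Type*} (F : Set (Finset I)) : Set (L2 I) := ⋃ s ∈ F, faceSet s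

/-- The open star of the face with vertex set `s` in the complex `F`: the union of the
relative interiors of all faces of `F` containing it. -/
def openStar {I : Type*} (F : Set (Finset I)) (s : Finset I) : Set (L2 I) :=
  ⋃ t ∈ F, ⋃ (_ : s ⊆ t), {x | memRelInt t x}

/-- The smallest subcomplex of `F` whose underlying set contains `A`
(encoded by its collection of faces). -/
def hullFaces {I : Type*} (F : Set (Finset I)) (A : Set (L2 I)) : Set (Finset I) :=
  ⋂₀ {G : Set (Finset I) | G ⊆ F ∧ IsSubcomplex G ∧ A ⊆ cpxCarrier G}

/-- The pointwise (lower) Lipschitz constant at `x` of the restriction of `f` to `S`: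
`liminf_{s → 0+} s⁻¹ · sup { d(f x, f y) : y ∈ S, d(x,y) < s }`, valued in `ℝ≥0∞`. -/
noncomputable def lipWithin {X Y : Type*} [PseudoMetricSpace X] [PseudoMetricSpace Y]
    (f : X → Y) (S : Set X) (x : X) : ℝ≥0∞ :=
  Filter.liminf
    (fun s : ℝ => (⨆ y ∈ S ∩ Metric.ball x s, edist (f x) (f y)) / ENNReal.ofReal s)
    (nhdsWithin 0 (Set.Ioi 0))

/-- The pointwise (lower) Lipschitz constant `lip f (x)`, valued in `ℝ≥0∞`. -/
noncomputable def plip {X Y : Type*} [PseudoMetricSpace X] [PseudoMetricSpace Y]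
    (f : X → Y) (x : X) : ℝ≥0∞ := lipWithin f Set.univ x

/-- A subset `S` of a metric space is `c`-quasiconvex: any two of its points are joined by a
continuous curve in `S` of length (total variation) at most `c` times their distance. -/
def QuasiconvexSet {X : Type*} [PseudoMetricSpace X] (S : Set X) (c : ℝ) : Prop :=
  ∀ x ∈ S, ∀ y ∈ S, ∃ γ : ℝ → X, ContinuousOn γ (Set.Icc 0 1) ∧
    Set.MapsTo γ (Set.Icc 0 1) S ∧ γ 0 = x ∧ γ 1 = y ∧
    eVariationOn γ (Set.Icc 0 1) ≤ ENNReal.ofReal (c * dist x y)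

/-- The intrinsic (length) metric of `S`: the infimal length of continuous curves in `S`
joining `x` and `y`, valued in `ℝ≥0∞` (with `inf ∅ = ∞`). -/
noncomputable def intrinsicDist {X : Type*} [PseudoMetricSpace X] (S : Set X) (x y : X) : ℝ≥0∞ :=
  ⨅ (γ : ℝ → X) (_ : ContinuousOn γ (Set.Icc 0 1) ∧ Set.MapsTo γ (Set.Icc 0 1) S ∧
      γ 0 = x ∧ γ 1 = y),
    eVariationOn γ (Set.Icc 0 1)

/-- `X` has Nagata dimension `≤ n` with constant `c`: for every `s > 0` there is a covering of
`X` by sets of diameter `≤ c·s` such that every set of diameter `≤ s` meets at most `n + 1`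
members of the covering. -/
def NagataDimLE (X : Type*) [PseudoMetricSpace X] (n : ℕ) (c : ℝ) : Prop :=
  ∀ s : ℝ, 0 < s → ∃ B : Set (Set X),
    (∀ x : X, ∃ b ∈ B, x ∈ b) ∧
    (∀ b ∈ B, EMetric.diam b ≤ ENNReal.ofReal (c * s)) ∧
    (∀ A : Set X, EMetric.diam A ≤ ENNReal.ofReal s →
      {b | b ∈ B ∧ (b ∩ A).Nonempty}.encard ≤ (n : ℕ∞) + 1)

/-- `Y` is Lipschitz `k`-connected with constant `lam`: for `0 ≤ m ≤ k`, every `L`-Lipschitz map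
from the unit sphere `S^m ⊆ ℝ^{m+1}` to `Y` extends to a `lam·L`-Lipschitz map on the closed
unit ball `B^{m+1}`. -/
def LipschitzConnectedWith (Y : Type*) [PseudoMetricSpace Y] (k : ℕ) (lam : ℝ) : Prop :=
  ∀ m : ℕ, m ≤ k → ∀ L : ℝ, 0 < L →
    ∀ f : EuclideanSpace ℝ (Fin (m + 1)) → Y,
      LipschitzOnWith (Real.toNNReal L) f (Metric.sphere 0 1) →
      ∃ g : EuclideanSpace ℝ (Fin (m + 1)) → Y,
        LipschitzOnWith (Real.toNNReal (lam * L)) g (Metric.closedBall 0 1) ∧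
        Set.EqOn f g (Metric.sphere 0 1)

end

section Aux

variable {I : Type*}

lemma stdVec_apply_self {I : Type*} (i : I) : stdVec i i = 1 := by
  rw [stdVec]; exact dif_pos rfl
lemma stdVec_apply_ne {I : Type*} {i j : I} (h : j ≠ i) : stdVec i j = 0 := by
  rw [stdVec]; exact dif_neg h
lemma coord_abs_le_dist {I : Type*} (x y : L2 I) (i : I) : |x i - y i| ≤ dist x y := by
  rw [dist_eq_norm]
  have := lp.norm_apply_le_norm (by norm_num : (2:ℝ≥0∞) ≠ 0) (x - y) i
  rw [lp.coeFn_sub] at this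
  simpa [Real.norm_eq_abs] using this

lemma mem_faceSet_iff {I : Type*} {s : Finset I} {x : L2 I} :
    x ∈ faceSet s ↔ (∀ i, 0 ≤ x i) ∧ (∀ i ∉ s, x i = 0) ∧ ∑ i ∈ s, x i = 1 := by
  classical
  constructor
  · intro hx
    rw [faceSet, convexHull_eq] at hx
    obtain ⟨ι, t, w, v, hw₀, hw₁, hv, hx⟩ := hx
    choose k hk hkv using fun i (hi : i ∈ t) => hv i hi
    have hcm : ∀ j, x j = ∑ i ∈ t.attach, w i * stdVec (k i i.2) j := by
      intro j
      rw [← hx, Finset.centerMass_eq_of_sum_1 _ _ hw₁]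
      rw [← Finset.sum_attach t (fun i => w i • v i)]
      simp only [lp.coeFn_sum, Finset.sum_apply, lp.coeFn_smul, Pi.smul_apply, smul_eq_mul]
      exact Finset.sum_congr rfl fun i _ => by rw [← hkv i i.2]
    have hstd : ∀ (a j : I), stdVec a j = if j = a then 1 else 0 := by
      intro a j
      split <;> rename_i hh
      · subst hh; exact stdVec_apply_self _
      · exact stdVec_apply_ne hh
    refine ⟨fun j => ?_, fun j hj => ?_, ?_⟩
    · rw [hcm j]
      refine Finset.sum_nonneg fun i _ => ?_
      rw [hstd]
      split <;> simp [hw₀ i i.2]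
    · rw [hcm j]
      refine Finset.sum_eq_zero fun i _ => ?_
      rw [hstd, if_neg, mul_zero]
      rintro rfl; exact hj (hk i i.2)
    · have : ∀ j ∈ s, x j = ∑ i ∈ t.attach, w i * stdVec (k i i.2) j := fun j _ => hcm j
      rw [Finset.sum_congr rfl this, Finset.sum_comm]
      rw [← hw₁, ← Finset.sum_attach t w]
      refine Finset.sum_congr rfl fun i _ => ?_
      rw [Finset.sum_eq_single (k i i.2)]
      · rw [stdVec_apply_self, mul_one]
      · intro j _ hne; rw [stdVec_apply_ne hne, mul_zero]
      · intro hcon; exact absurd (Finset.mem_coe.mp (hk i i.2)) hcon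
  · rintro ⟨h0, hsupp, hsum⟩
    have hx : x = s.centerMass (fun i => x i) stdVec := by
      rw [Finset.centerMass_eq_of_sum_1 _ _ hsum]
      refine lp.ext (funext fun j => ?_)
      rw [lp.coeFn_sum, Finset.sum_apply]
      simp only [lp.coeFn_smul, Pi.smul_apply, smul_eq_mul]
      by_cases hj : j ∈ s
      · rw [Finset.sum_eq_single j]
        · simp [stdVec_apply_self]
        · intro i _ hne
          rw [stdVec_apply_ne hne.symm, mul_zero]
        · intro hcon; exact absurd hj hcon
      · rw [hsupp j hj, Finset.sum_eq_zero]
        intro i hi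
        have : j ≠ i := fun hji => hj (hji ▸ hi)
        simp [stdVec_apply_ne this]
    rw [hx, faceSet]
    exact Finset.centerMass_mem_convexHull _ (fun i _ => h0 i) (by rw [hsum]; norm_num)
      (fun i hi => Set.mem_image_of_mem _ hi)


lemma mem_cpxCarrier_iff {F : Set (Finset I)} {x : L2 I} :
    x ∈ cpxCarrier F ↔ ∃ s ∈ F, x ∈ faceSet s := by
  simp [cpxCarrier, Set.mem_iUnion]

lemma exists_commonFace {F : Set (Finset I)} {x : L2 I} (hx : x ∈ cpxCarrier F) :
    ∃ δ > 0, ∀ y ∈ cpxCarrier F, dist x y < δ → ∃ s ∈ F, x ∈ faceSet s ∧ y ∈ faceSet s := by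
  classical
  obtain ⟨s₀, hs₀F, hxs₀⟩ := mem_cpxCarrier_iff.mp hx
  obtain ⟨hx0, hxsupp, hxsum⟩ := mem_faceSet_iff.mp hxs₀
  set s' : Finset I := s₀.filter (fun i => x i ≠ 0) with hs'
  have hne : s'.Nonempty := by
    by_contra hQ; rw [Finset.not_nonempty_iff_eq_empty] at hQ
    have h0s : ∑ i ∈ s₀, x i = 0 := Finset.sum_eq_zero (fun i hi => by
      by_contra hxi
      have : i ∈ s' := Finset.mem_filter.mpr ⟨hi, hxi⟩
      simp [hQ] at this)
    rw [hxsum] at h0s; norm_num at h0s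
  refine ⟨s'.inf' hne (fun i => x i), ?_, ?_⟩
  · rw [gt_iff_lt, Finset.lt_inf'_iff]
    intro i hi
    exact lt_of_le_of_ne (hx0 i) (Ne.symm (Finset.mem_filter.mp hi).2)
  · intro y hy hdist
    obtain ⟨t, htF, hyt⟩ := mem_cpxCarrier_iff.mp hy
    obtain ⟨hy0, hysupp, _⟩ := mem_faceSet_iff.mp hyt
    refine ⟨t, htF, ?_, hyt⟩
    have hst : ∀ i ∈ s', i ∈ t := by
      intro i hi
      by_contra hit
      have h1 : y i = 0 := hysupp i hit
      have h2 : x i ≤ |x i - y i| := by rw [h1, sub_zero, abs_of_nonneg (hx0 i)]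
      have h3 := coord_abs_le_dist x y i
      have h4 : s'.inf' hne (fun i => x i) ≤ x i := Finset.inf'_le _ hi
      linarith
    have hmem : ∀ i, x i ≠ 0 → i ∈ s' := by
      intro i hxi
      have hi0 : i ∈ s₀ := by by_contra hh; exact hxi (hxsupp i hh)
      exact Finset.mem_filter.mpr ⟨hi0, hxi⟩
    rw [mem_faceSet_iff]
    refine ⟨hx0, fun i hit => ?_, ?_⟩
    · by_contra hxi
      exact hit (hst i (hmem i hxi))
    · have e1 : ∑ i ∈ s₀, x i = ∑ i ∈ s', x i :=
        (Finset.sum_filter_of_ne (fun i _ h => h)).symm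
      have e2 : ∑ i ∈ t, x i = ∑ i ∈ s', x i := by
        refine (Finset.sum_subset (fun i hi => hst i hi) ?_).symm
        intro i _ his'
        by_contra hxi
        exact his' (hmem i hxi)
      rw [e2, ← e1, hxsum]

/-- The chain lemma: along a continuous curve in the carrier, there is a monotone finite
partition such that consecutive points lie in a common face. -/
lemma exists_chain {F : Set (Finset I)} {γ : ℝ → L2 I} {a b : ℝ} (hab : a ≤ b)
    (hcont : ContinuousOn γ (Set.Icc a b)) (hmap : Set.MapsTo γ (Set.Icc a b) (cpxCarrier F)) :
    ∃ n : ℕ, ∃ u : ℕ → ℝ, Monotone u ∧ u 0 = a ∧ (∀ m, n ≤ m → u m = b) ∧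
      (∀ m, u m ∈ Set.Icc a b) ∧
      ∀ m, ∃ s ∈ F, γ (u m) ∈ faceSet s ∧ γ (u (m + 1)) ∈ faceSet s := by
  set P : ℝ → Prop := fun r => ∃ n : ℕ, ∃ u : ℕ → ℝ, Monotone u ∧ u 0 = a ∧
      (∀ m, n ≤ m → u m = r) ∧ (∀ m, u m ∈ Set.Icc a b) ∧
      ∀ m, ∃ s ∈ F, γ (u m) ∈ faceSet s ∧ γ (u (m + 1)) ∈ faceSet s with hP
  have hrefl : ∀ r ∈ Set.Icc a b, ∃ s ∈ F, γ r ∈ faceSet s ∧ γ r ∈ faceSet s := by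
    intro r hr
    obtain ⟨s, hs, hγ⟩ := mem_cpxCarrier_iff.mp (hmap hr)
    exact ⟨s, hs, hγ, hγ⟩
  have hext : ∀ r r', r ∈ Set.Icc a b → r' ∈ Set.Icc a b → r ≤ r' →
      (∃ s ∈ F, γ r ∈ faceSet s ∧ γ r' ∈ faceSet s) → P r → P r' := by
    rintro r r' hr hr' hrr' hSF ⟨n, u, hu, hu0, hun, humem, huS⟩
    classical
    set v : ℕ → ℝ := fun m => if m ≤ n then u m else r' with hv
    have hvle : ∀ m, m ≤ n → v m = u m := fun m hm => if_pos hm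
    have hvgt : ∀ m, ¬ m ≤ n → v m = r' := fun m hm => if_neg hm
    refine ⟨n + 1, v, ?_, ?_, ?_, ?_, ?_⟩
    · intro m m' hmm'
      by_cases h2 : m' ≤ n
      · rw [hvle m (le_trans hmm' h2), hvle m' h2]; exact hu hmm'
      · rw [hvgt m' h2]
        by_cases h1 : m ≤ n
        · rw [hvle m h1]
          exact le_trans (le_trans (hu h1) (le_of_eq (hun n le_rfl))) hrr'
        · rw [hvgt m h1]
    · rw [hvle 0 (Nat.zero_le n), hu0]
    · intro m hm; exact hvgt m (by omega)
    · intro m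
      by_cases h1 : m ≤ n
      · rw [hvle m h1]; exact humem m
      · rw [hvgt m h1]; exact hr'
    · intro m
      by_cases h1 : m + 1 ≤ n
      · rw [hvle m (by omega), hvle (m + 1) h1]; exact huS m
      · by_cases h2 : m ≤ n
        · have hmn : m = n := by omega
          rw [hvle m h2, hvgt (m + 1) h1, hmn, hun n le_rfl]
          exact hSF
        · rw [hvgt m h2, hvgt (m + 1) h1]
          exact hrefl r' hr'
  set S : Set ℝ := {r | r ∈ Set.Icc a b ∧ P r} with hS
  have haS : a ∈ S := by
    refine ⟨⟨le_rfl, hab⟩, 0, fun _ => a, monotone_const, rfl, fun _ _ => rfl,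
      fun _ => ⟨le_rfl, hab⟩, fun m => hrefl a ⟨le_rfl, hab⟩⟩
  have hSne : S.Nonempty := ⟨a, haS⟩
  have hSbdd : BddAbove S := ⟨b, fun r hr => hr.1.2⟩
  set T : ℝ := sSup S with hT
  have haT : a ≤ T := le_csSup hSbdd haS
  have hTb : T ≤ b := csSup_le hSne (fun r hr => hr.1.2)
  have hTmem : T ∈ Set.Icc a b := ⟨haT, hTb⟩
  obtain ⟨δ, hδ0, hδ⟩ := exists_commonFace (hmap hTmem)
  have hctsT : ContinuousWithinAt γ (Set.Icc a b) T := hcont T hTmem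
  rw [Metric.continuousWithinAt_iff] at hctsT
  obtain ⟨ε, hε0, hε⟩ := hctsT δ hδ0
  have hPT : P T := by
    obtain ⟨r, hrS, hrT⟩ := exists_lt_of_lt_csSup hSne (by linarith : T - ε < T)
    have hrleT : r ≤ T := le_csSup hSbdd hrS
    have hdist : dist (γ T) (γ r) < δ := by
      rw [dist_comm]
      refine hε hrS.1 ?_
      rw [Real.dist_eq, abs_of_nonpos (by linarith)]
      linarith
    obtain ⟨s, hsF, hT1, hr1⟩ := hδ (γ r) (hmap hrS.1) hdist
    exact hext r T hrS.1 hTmem hrleT ⟨s, hsF, hr1, hT1⟩ hrS.2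
  have hTeqb : T = b := by
    by_contra hne
    have hTltb : T < b := lt_of_le_of_ne hTb hne
    set r' : ℝ := min b (T + ε / 2) with hr'
    have hTr' : T < r' := lt_min hTltb (by linarith)
    have hr'mem : r' ∈ Set.Icc a b := ⟨le_trans haT hTr'.le, min_le_left _ _⟩
    have hdist : dist (γ T) (γ r') < δ := by
      rw [dist_comm]
      refine hε hr'mem ?_
      rw [Real.dist_eq, abs_of_nonneg (by linarith)]
      have : r' ≤ T + ε / 2 := min_le_right _ _
      linarith
    obtain ⟨s, hsF, hT1, hr1⟩ := hδ (γ r') (hmap hr'mem) hdist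
    have : r' ∈ S := ⟨hr'mem, hext T r' hTmem hr'mem hTr'.le ⟨s, hsF, hT1, hr1⟩ hPT⟩
    have : r' ≤ T := le_csSup hSbdd this
    linarith
  rw [hTeqb] at hPT
  exact hPT

end Aux

/-- If `h : |Σ| → X` is a homeomorphism which is `D`-bilipschitz on every face
and `X` is `c`-quasiconvex, then `h` is `(c·D)`-bilipschitz from `(|Σ|, d_i)` to `X`, i.e.
`(cD)⁻¹·d_i(z,z') ≤ d(h z, h z') ≤ cD·d_i(z,z')` for all `z, z' ∈ |Σ|` (stated in `ℝ≥0∞`). -/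


theorem stmt_6 {I : Type*} [Nonempty I] {X : Type*} [MetricSpace X]
    (F : Set (Finset I)) (hF : IsSubcomplex F)
    (c D : ℝ) (hc : 1 ≤ c) (hD : 1 ≤ D)
    (h : ↥(cpxCarrier F) ≃ₜ X)
    (hbil : ∀ s ∈ F, ∀ z z' : ↥(cpxCarrier F), (z : L2 I) ∈ faceSet s →
      (z' : L2 I) ∈ faceSet s →
      D⁻¹ * dist z z' ≤ dist (h z) (h z') ∧ dist (h z) (h z') ≤ D * dist z z')
    (hqc : QuasiconvexSet (Set.univ : Set X) c) :
    ∀ z z' : ↥(cpxCarrier F),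
      ENNReal.ofReal (dist (h z) (h z')) ≤
          ENNReal.ofReal (c * D) * intrinsicDist (cpxCarrier F) (z : L2 I) (z' : L2 I) ∧
      intrinsicDist (cpxCarrier F) (z : L2 I) (z' : L2 I) ≤
          ENNReal.ofReal (c * D) * ENNReal.ofReal (dist (h z) (h z')) := by
  classical
  have hD0 : (0:ℝ) < D := lt_of_lt_of_le one_pos hD
  have hc0 : (0:ℝ) < c := lt_of_lt_of_le one_pos hc
  have hcD0 : (0:ℝ) < c * D := mul_pos hc0 hD0
  intro z z'
  constructor
  · -- `d(h z, h z') ≤ cD · d_i(z, z')`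
    have key : ∀ γ : ℝ → L2 I,
        (ContinuousOn γ (Set.Icc 0 1) ∧ Set.MapsTo γ (Set.Icc 0 1) (cpxCarrier F) ∧
          γ 0 = (z : L2 I) ∧ γ 1 = (z' : L2 I)) →
        ENNReal.ofReal (dist (h z) (h z')) ≤
          ENNReal.ofReal (c * D) * eVariationOn γ (Set.Icc 0 1) := by
      rintro γ ⟨hγc, hγm, hγ0, hγ1⟩
      obtain ⟨n, u, hu, hu0, hun, humem, huS⟩ := exists_chain zero_le_one hγc hγm
      set f : ℕ → X := fun m => h ⟨γ (u m), hγm (humem m)⟩ with hf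
      have hf0 : f 0 = h z := by
        apply congrArg h; apply Subtype.ext
        show γ (u 0) = (z : L2 I)
        rw [hu0]; exact hγ0
      have hfn : f n = h z' := by
        apply congrArg h; apply Subtype.ext
        show γ (u n) = (z' : L2 I)
        rw [hun n le_rfl]; exact hγ1
      have perpair : ∀ i, edist (f i) (f (i + 1)) ≤
          ENNReal.ofReal D * edist (γ (u i)) (γ (u (i + 1))) := by
        intro i
        obtain ⟨s, hsF, h1, h2⟩ := huS i
        have hb := (hbil s hsF ⟨γ (u i), hγm (humem i)⟩ ⟨γ (u (i + 1)), hγm (humem (i + 1))⟩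
          h1 h2).2
        rw [Subtype.dist_eq] at hb
        rw [edist_dist, edist_dist, ← ENNReal.ofReal_mul hD0.le]
        exact ENNReal.ofReal_le_ofReal hb
      calc ENNReal.ofReal (dist (h z) (h z')) = edist (f 0) (f n) := by
            rw [hf0, hfn, edist_dist]
        _ ≤ ∑ i ∈ Finset.range n, edist (f i) (f (i + 1)) := edist_le_range_sum_edist f n
        _ ≤ ∑ i ∈ Finset.range n, ENNReal.ofReal D * edist (γ (u i)) (γ (u (i + 1))) :=
            Finset.sum_le_sum fun i _ => perpair i
        _ = ENNReal.ofReal D * ∑ i ∈ Finset.range n, edist (γ (u i)) (γ (u (i + 1))) :=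
            (Finset.mul_sum _ _ _).symm
        _ ≤ ENNReal.ofReal D * eVariationOn γ (Set.Icc 0 1) := by
            refine mul_le_mul_right ?_ _
            have hsum := eVariationOn.sum_le (f := γ) (n := n) hu humem
            refine le_trans (le_of_eq ?_) hsum
            exact Finset.sum_congr rfl fun i _ => edist_comm _ _
        _ ≤ ENNReal.ofReal (c * D) * eVariationOn γ (Set.Icc 0 1) := by
            refine mul_le_mul_left (ENNReal.ofReal_le_ofReal ?_) _
            nlinarith
    have hne0 : ENNReal.ofReal (c * D) ≠ 0 := (ENNReal.ofReal_pos.mpr hcD0).ne'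
    have hnetop : ENNReal.ofReal (c * D) ≠ ⊤ := ENNReal.ofReal_ne_top
    calc ENNReal.ofReal (dist (h z) (h z')) ≤
        ⨅ (γ : ℝ → L2 I) (_ : ContinuousOn γ (Set.Icc 0 1) ∧
            Set.MapsTo γ (Set.Icc 0 1) (cpxCarrier F) ∧
            γ 0 = (z : L2 I) ∧ γ 1 = (z' : L2 I)),
          ENNReal.ofReal (c * D) * eVariationOn γ (Set.Icc 0 1) := le_iInf₂ key
      _ = ENNReal.ofReal (c * D) * intrinsicDist (cpxCarrier F) (z : L2 I) (z' : L2 I) := by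
          rw [intrinsicDist, ENNReal.mul_iInf_of_ne hne0 hnetop]
          exact iInf_congr fun γ => (ENNReal.mul_iInf_of_ne hne0 hnetop).symm
  · -- `d_i(z, z') ≤ cD · d(h z, h z')`
    obtain ⟨σ, hσc, hσm, hσ0, hσ1, hσvar⟩ := hqc (h z) trivial (h z') trivial
    set γ : ℝ → L2 I := fun t => ((h.symm (σ t) : ↥(cpxCarrier F)) : L2 I) with hγdef
    have hγc : ContinuousOn γ (Set.Icc 0 1) :=
      continuous_subtype_val.comp_continuousOn (h.symm.continuous.comp_continuousOn hσc)
    have hγm : Set.MapsTo γ (Set.Icc 0 1) (cpxCarrier F) := fun t _ => (h.symm (σ t)).2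
    have hγ0 : γ 0 = (z : L2 I) := by
      simp only [hγdef, hσ0, Homeomorph.symm_apply_apply]
    have hγ1 : γ 1 = (z' : L2 I) := by
      simp only [hγdef, hσ1, Homeomorph.symm_apply_apply]
    have pair : ∀ x y : ℝ, x ∈ Set.Icc (0:ℝ) 1 → y ∈ Set.Icc (0:ℝ) 1 → x ≤ y →
        edist (γ x) (γ y) ≤ ENNReal.ofReal D * eVariationOn σ (Set.Icc x y) := by
      intro x y hx hy hxy
      obtain ⟨n, u, hu, hu0, hun, humem, huS⟩ := exists_chain hxy
        (hγc.mono (Set.Icc_subset_Icc hx.1 hy.2))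
        (hγm.mono_left (Set.Icc_subset_Icc hx.1 hy.2))
      have perpair : ∀ i, edist (γ (u i)) (γ (u (i + 1))) ≤
          ENNReal.ofReal D * edist (σ (u i)) (σ (u (i + 1))) := by
        intro i
        obtain ⟨s, hsF, h1, h2⟩ := huS i
        have hb := (hbil s hsF (h.symm (σ (u i))) (h.symm (σ (u (i + 1)))) h1 h2).1
        rw [Homeomorph.apply_symm_apply, Homeomorph.apply_symm_apply, Subtype.dist_eq] at hb
        have hd : dist (γ (u i)) (γ (u (i + 1))) ≤ D * dist (σ (u i)) (σ (u (i + 1))) :=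
          (inv_mul_le_iff₀ hD0).mp hb
        rw [edist_dist, edist_dist, ← ENNReal.ofReal_mul hD0.le]
        exact ENNReal.ofReal_le_ofReal hd
      calc edist (γ x) (γ y) = edist (γ (u 0)) (γ (u n)) := by rw [hu0, hun n le_rfl]
        _ ≤ ∑ i ∈ Finset.range n, edist (γ (u i)) (γ (u (i + 1))) :=
            edist_le_range_sum_edist (fun m => γ (u m)) n
        _ ≤ ∑ i ∈ Finset.range n, ENNReal.ofReal D * edist (σ (u i)) (σ (u (i + 1))) :=
            Finset.sum_le_sum fun i _ => perpair i
        _ = ENNReal.ofReal D * ∑ i ∈ Finset.range n, edist (σ (u i)) (σ (u (i + 1))) :=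
            (Finset.mul_sum _ _ _).symm
        _ ≤ ENNReal.ofReal D * eVariationOn σ (Set.Icc x y) := by
            refine mul_le_mul_right ?_ _
            have hsum := eVariationOn.sum_le (f := σ) (n := n) hu humem
            refine le_trans (le_of_eq ?_) hsum
            exact Finset.sum_congr rfl fun i _ => edist_comm _ _
    have glue : ∀ (n : ℕ) (u : ℕ → ℝ), Monotone u → (∀ i, u i ∈ Set.Icc (0:ℝ) 1) →
        ∑ i ∈ Finset.range n, edist (γ (u (i + 1))) (γ (u i)) ≤
          ENNReal.ofReal D * eVariationOn σ (Set.Icc (u 0) (u n)) := by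
      intro n
      induction n with
      | zero => intro u hu hus; simp
      | succ n ih =>
        intro u hu hus
        rw [Finset.sum_range_succ]
        have h1 := ih u hu hus
        have h2 : edist (γ (u (n + 1))) (γ (u n)) ≤
            ENNReal.ofReal D * eVariationOn σ (Set.Icc (u n) (u (n + 1))) := by
          rw [edist_comm]
          exact pair (u n) (u (n + 1)) (hus n) (hus (n + 1)) (hu (Nat.le_succ n))
        have hIcc := eVariationOn.Icc_add_Icc σ (s := Set.univ)
          (hu (Nat.zero_le n)) (hu (Nat.le_succ n)) (Set.mem_univ (u n))
        simp only [Set.univ_inter] at hIcc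
        calc ∑ i ∈ Finset.range n, edist (γ (u (i + 1))) (γ (u i)) +
              edist (γ (u (n + 1))) (γ (u n)) ≤
            ENNReal.ofReal D * eVariationOn σ (Set.Icc (u 0) (u n)) +
              ENNReal.ofReal D * eVariationOn σ (Set.Icc (u n) (u (n + 1))) := add_le_add h1 h2
          _ = ENNReal.ofReal D * (eVariationOn σ (Set.Icc (u 0) (u n)) +
              eVariationOn σ (Set.Icc (u n) (u (n + 1)))) := (mul_add _ _ _).symm
          _ = ENNReal.ofReal D * eVariationOn σ (Set.Icc (u 0) (u (n + 1))) := by rw [hIcc]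
    have hvar : eVariationOn γ (Set.Icc 0 1) ≤ ENNReal.ofReal D * eVariationOn σ (Set.Icc 0 1) := by
      rw [eVariationOn]
      refine iSup_le ?_
      rintro ⟨n, u, hu, hus⟩
      refine le_trans (glue n u hu hus) (mul_le_mul_right (eVariationOn.mono σ ?_) _)
      exact Set.Icc_subset_Icc (hus 0).1 (hus n).2
    calc intrinsicDist (cpxCarrier F) (z : L2 I) (z' : L2 I) ≤ eVariationOn γ (Set.Icc 0 1) :=
          iInf₂_le γ ⟨hγc, hγm, hγ0, hγ1⟩
      _ ≤ ENNReal.ofReal D * eVariationOn σ (Set.Icc 0 1) := hvar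
      _ ≤ ENNReal.ofReal D * ENNReal.ofReal (c * dist (h z) (h z')) := mul_le_mul_right hσvar _
      _ = ENNReal.ofReal (c * D) * ENNReal.ofReal (dist (h z) (h z')) := by
          rw [← ENNReal.ofReal_mul hD0.le, ← ENNReal.ofReal_mul hcD0.le]
          congr 1
          ring
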